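/- Let G = (V, E) be a finite simple graph and D = (V, A) the associated directed graph with the two opposite arcs v→w and w→v for each edge {v,w} ∈ E. In the polynomial ring ℚ[P_a : a ∈ A], the ideal generated by the binomials P^ω − P^{r(ω)}, where ω ranges over ALL closed paths in D, equals the ideal generated by the binomials P^ω − P^{r(ω)}, where ω ranges over the elementary closed paths (cycles) of D only. -/
import Mathlib


/-- The arcs of the directed graph `D = (V, A)` associated to a simple graph `G`:
each edge `{v,w}` gives the two arcs `v→w` and `w→v`. -/
abbrev Arc {V : Type*} (G : SimpleGraph V) : Type _ := {p : V × V // G.Adj p.1 p.2}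

open MvPolynomial

section Helpers

lemma fin_mk_add_one {n x : ℕ} (h : x + 1 < n + 1) (hx : x < n + 1) :
    (⟨x, hx⟩ : Fin (n + 1)) + 1 = ⟨x + 1, h⟩ := by
  ext
  rw [Fin.val_add_one_of_lt (by simp [Fin.lt_def]; omega)]

lemma fin_mk_last_add_one {n : ℕ} (hx : n < n + 1) : (⟨n, hx⟩ : Fin (n + 1)) + 1 = 0 := by
  have : (⟨n, hx⟩ : Fin (n+1)) = Fin.last n := rfl
  rw [this, Fin.last_add_one]

variable {V : Type*} [Fintype V] [DecidableEq V] (G : SimpleGraph V) [DecidableRel G.Adj]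

def cycSet : Set (MvPolynomial (Arc G) ℚ) :=
  {f | ∃ (n : ℕ) (ω : Fin (n + 1) → V) (h : ∀ i, G.Adj (ω i) (ω (i + 1))),
        Function.Injective ω ∧
        f = (∏ i, MvPolynomial.X (⟨(ω i, ω (i + 1)), h i⟩ : Arc G))
          - ∏ i, MvPolynomial.X (⟨(ω (i + 1), ω i), (h i).symm⟩ : Arc G)}

lemma prod_split {M : Type*} [CommMonoid M] {n a b : ℕ} (hab : n + 1 = (a + 1) + (b + 1))
    (f : Fin (n + 1) → M) :
    ∏ i, f i = (∏ k : Fin (a + 1), f ⟨k.val, by omega⟩) *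
      ∏ k : Fin (b + 1), f ⟨(a + 1) + k.val, by have := k.isLt; omega⟩ := by
  rw [Fintype.prod_equiv (finCongr hab) f (fun i => f (finCongr hab.symm i))
    (fun i => by simp)]
  rw [Fin.prod_univ_add]
  congr 1

lemma key0 {n : ℕ}
    (IH : ∀ k, k < n → ∀ (ω : Fin (k + 1) → V) (h : ∀ i, G.Adj (ω i) (ω (i + 1))),
      (∏ i, MvPolynomial.X (⟨(ω i, ω (i + 1)), h i⟩ : Arc G))
        - ∏ i, MvPolynomial.X (⟨(ω (i + 1), ω i), (h i).symm⟩ : Arc G) ∈ Ideal.span (cycSet G))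
    (ω : Fin (n + 1) → V) (h : ∀ i, G.Adj (ω i) (ω (i + 1)))
    (m : Fin (n + 1)) (hm0 : m ≠ 0) (hm : ω 0 = ω m) :
    (∏ i, MvPolynomial.X (⟨(ω i, ω (i + 1)), h i⟩ : Arc G))
      - ∏ i, MvPolynomial.X (⟨(ω (i + 1), ω i), (h i).symm⟩ : Arc G)
      ∈ Ideal.span (cycSet G) := by
  have hs1 : 0 < m.val := Fin.pos_of_ne_zero hm0
  have hsn : m.val ≤ n := Fin.is_le m
  set s := m.val with hs
  set n₁ := s - 1 with hn₁
  set n₂ := n - s with hn₂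
  have hab : n + 1 = (n₁ + 1) + (n₂ + 1) := by omega
  have hs' : n₁ + 1 = s := by omega
  set α : Fin (n₁ + 1) → V := fun k => ω ⟨k.val, by omega⟩ with hα
  set β : Fin (n₂ + 1) → V := fun k => ω ⟨(n₁ + 1) + k.val, by have := k.isLt; omega⟩ with hβ
  have hα2 : ∀ k : Fin (n₁ + 1), ω ((⟨k.val, by omega⟩ : Fin (n + 1)) + 1) = α (k + 1) := by
    intro k
    have hk := k.isLt
    rcases Nat.lt_or_ge k.val n₁ with hlt | hge
    · rw [fin_mk_add_one (by omega), fin_mk_add_one (n := n₁) (by omega)]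
    · have hk' : k.val = n₁ := by omega
      have e1 : (⟨k.val, by omega⟩ : Fin (n + 1)) + 1 = m := by
        rw [fin_mk_add_one (by omega)]
        ext; simp; omega
      have e2 : (k + 1 : Fin (n₁ + 1)) = 0 := by
        have hkl : k = Fin.last n₁ := by ext; simpa using hk'
        rw [hkl, Fin.last_add_one]
      rw [e1, e2, ← hm]
      show ω 0 = ω ⟨(0 : Fin (n₁ + 1)).val, by omega⟩
      congr 1
  have hβ2 : ∀ k : Fin (n₂ + 1),
      ω ((⟨(n₁ + 1) + k.val, by have := k.isLt; omega⟩ : Fin (n + 1)) + 1) = β (k + 1) := by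
    intro k
    have hk := k.isLt
    rcases Nat.lt_or_ge k.val n₂ with hlt | hge
    · rw [fin_mk_add_one (by omega), fin_mk_add_one (n := n₂) (by omega)]
      show ω ⟨(n₁ + 1) + k.val + 1, by omega⟩ = ω ⟨(n₁ + 1) + (k.val + 1), by omega⟩
      congr 1
    · have hk' : k.val = n₂ := by omega
      have e1 : (⟨(n₁ + 1) + k.val, by omega⟩ : Fin (n + 1)) + 1 = 0 := by
        have : ((n₁ + 1) + k.val) = n := by omega
        have e : (⟨(n₁ + 1) + k.val, by omega⟩ : Fin (n + 1)) = ⟨n, by omega⟩ := by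
          ext; simpa using this
        rw [e, fin_mk_last_add_one]
      have e2 : (k + 1 : Fin (n₂ + 1)) = 0 := by
        have hkl : k = Fin.last n₂ := by ext; simpa using hk'
        rw [hkl, Fin.last_add_one]
      rw [e1, e2, hm]
      show ω m = ω ⟨(n₁ + 1) + (0 : Fin (n₂ + 1)).val, by omega⟩
      congr 1
      ext
      simp
      omega
  have hαadj : ∀ k : Fin (n₁ + 1), G.Adj (α k) (α (k + 1)) := by
    intro k
    have := h ⟨k.val, by have := k.isLt; omega⟩
    rwa [hα2 k] at this
  have hβadj : ∀ k : Fin (n₂ + 1), G.Adj (β k) (β (k + 1)) := by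
    intro k
    have := h ⟨(n₁ + 1) + k.val, by have := k.isLt; omega⟩
    rwa [hβ2 k] at this
  have hA : (∏ i, MvPolynomial.X (⟨(ω i, ω (i + 1)), h i⟩ : Arc G))
      = (∏ k, MvPolynomial.X (⟨(α k, α (k + 1)), hαadj k⟩ : Arc G) : MvPolynomial (Arc G) ℚ)
        * ∏ k, MvPolynomial.X (⟨(β k, β (k + 1)), hβadj k⟩ : Arc G) := by
    rw [prod_split hab]
    congr 1
    · exact Finset.prod_congr rfl (fun k _ => by
        congr 1; exact Subtype.ext (Prod.ext rfl (hα2 k)))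
    · exact Finset.prod_congr rfl (fun k _ => by
        congr 1; exact Subtype.ext (Prod.ext rfl (hβ2 k)))
  have hB : (∏ i, MvPolynomial.X (⟨(ω (i + 1), ω i), (h i).symm⟩ : Arc G))
      = (∏ k, MvPolynomial.X (⟨(α (k + 1), α k), (hαadj k).symm⟩ : Arc G) : MvPolynomial (Arc G) ℚ)
        * ∏ k, MvPolynomial.X (⟨(β (k + 1), β k), (hβadj k).symm⟩ : Arc G) := by
    rw [prod_split hab]
    congr 1
    · exact Finset.prod_congr rfl (fun k _ => by
        congr 1; exact Subtype.ext (Prod.ext (hα2 k) rfl))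
    · exact Finset.prod_congr rfl (fun k _ => by
        congr 1; exact Subtype.ext (Prod.ext (hβ2 k) rfl))
  rw [hA, hB]
  have hid : ∀ A₁ B₁ A₂ B₂ : MvPolynomial (Arc G) ℚ,
      A₁ * A₂ - B₁ * B₂ = A₂ * (A₁ - B₁) + B₁ * (A₂ - B₂) := by intros; ring
  rw [hid]
  exact Ideal.add_mem _
    (Ideal.mul_mem_left _ _ (IH n₁ (by omega) α hαadj))
    (Ideal.mul_mem_left _ _ (IH n₂ (by omega) β hβadj))

lemma key : ∀ (n : ℕ) (ω : Fin (n + 1) → V) (h : ∀ i, G.Adj (ω i) (ω (i + 1))),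
    (∏ i, MvPolynomial.X (⟨(ω i, ω (i + 1)), h i⟩ : Arc G))
      - ∏ i, MvPolynomial.X (⟨(ω (i + 1), ω i), (h i).symm⟩ : Arc G)
      ∈ Ideal.span (cycSet G) := by
  intro n
  induction n using Nat.strong_induction_on with
  | _ n IH =>
  intro ω h
  by_cases hinj : Function.Injective ω
  · exact Ideal.subset_span ⟨n, ω, h, hinj, rfl⟩
  · rw [Function.not_injective_iff] at hinj
    obtain ⟨i, j, hij, hne⟩ := hinj
    set ω' : Fin (n + 1) → V := fun k => ω (k + i) with hω'
    have h' : ∀ k, G.Adj (ω' k) (ω' (k + 1)) := by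
      intro k
      have := h (k + i)
      simp only [hω']
      rwa [add_right_comm]
    have hArot : (∏ k, MvPolynomial.X (⟨(ω' k, ω' (k + 1)), h' k⟩ : Arc G) : MvPolynomial (Arc G) ℚ)
        = ∏ i', MvPolynomial.X (⟨(ω i', ω (i' + 1)), h i'⟩ : Arc G) := by
      refine Fintype.prod_equiv (Equiv.addRight i) _ _ (fun k => ?_)
      congr 1
      exact Subtype.ext (Prod.ext rfl (by show ω (k + 1 + i) = ω (k + i + 1); rw [add_right_comm]))
    have hBrot : (∏ k, MvPolynomial.X (⟨(ω' (k + 1), ω' k), (h' k).symm⟩ : Arc G) : MvPolynomial (Arc G) ℚ)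
        = ∏ i', MvPolynomial.X (⟨(ω (i' + 1), ω i'), (h i').symm⟩ : Arc G) := by
      refine Fintype.prod_equiv (Equiv.addRight i) _ _ (fun k => ?_)
      congr 1
      exact Subtype.ext (Prod.ext (by show ω (k + 1 + i) = ω (k + i + 1); rw [add_right_comm]) rfl)
    rw [← hArot, ← hBrot]
    apply key0 G IH ω' h' (j - i)
    · intro hc
      apply hne
      have : j - i + i = 0 + i := by rw [hc]
      exact (by simpa using this : j = i).symm
    · show ω (0 + i) = ω (j - i + i)
      simp [hij]

end Helpers

/-- in `ℚ[P_a : a ∈ A]`, the ideal generated by the binomials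
`P^ω − P^{r(ω)}` over all closed paths `ω` equals the ideal generated by those binomials
over the elementary closed paths (cycles) only. -/
theorem stmt_8 {V : Type*} [Fintype V] [DecidableEq V]
    (G : SimpleGraph V) [DecidableRel G.Adj] :
    Ideal.span {f : MvPolynomial (Arc G) ℚ |
      ∃ (n : ℕ) (ω : Fin (n + 1) → V) (h : ∀ i, G.Adj (ω i) (ω (i + 1))),
        f = (∏ i, MvPolynomial.X (⟨(ω i, ω (i + 1)), h i⟩ : Arc G))
          - ∏ i, MvPolynomial.X (⟨(ω (i + 1), ω i), (h i).symm⟩ : Arc G)} =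
    Ideal.span {f : MvPolynomial (Arc G) ℚ |
      ∃ (n : ℕ) (ω : Fin (n + 1) → V) (h : ∀ i, G.Adj (ω i) (ω (i + 1))),
        Function.Injective ω ∧
        f = (∏ i, MvPolynomial.X (⟨(ω i, ω (i + 1)), h i⟩ : Arc G))
          - ∏ i, MvPolynomial.X (⟨(ω (i + 1), ω i), (h i).symm⟩ : Arc G)} := by
  apply le_antisymm
  · rw [Ideal.span_le]
    rintro f ⟨n, ω, h, rfl⟩
    exact key G n ω h
  · exact Ideal.span_mono (fun f ⟨n, ω, h, _, hf⟩ => ⟨n, ω, h, hf⟩)
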